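/- Let G=(V,E) be a graph where vertex i has odd degree k ≤ d, and let z be an edge weighting with values in (0,1] such that for any two edges e1, e2 incident to i, z(e1)/z(e2) < (d+1)/(d-1). Then for any assignment A : V → {-1,+1}, the sign of the unweighted sum ∑_{j ∈ N(i)} A(j) equals the sign of the weighted sum ∑_{j ∈ N(i)} z(i,j)·A(j). -/

import Mathlib

lemma aux_pos {V : Type*} (S : Finset V) (d : ℕ) (hd : 3 ≤ d) (hcard : S.card ≤ d)
    (z : V → ℝ) (hz : ∀ j ∈ S, 0 < z j)
    (hlegal : ∀ j ∈ S, ∀ k ∈ S, z j / z k < ((d : ℝ) + 1) / ((d : ℝ) - 1))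
    (A : V → ℤ) (hA : ∀ j, A j = 1 ∨ A j = -1)
    (hsum : 0 < ∑ j ∈ S, (A j : ℝ)) :
    0 < ∑ j ∈ S, z j * (A j : ℝ) := by
  classical
  set P := S.filter (fun j => A j = 1) with hP
  set M := S.filter (fun j => A j = -1) with hM
  have hdisj : Disjoint P M := by
    rw [Finset.disjoint_left]
    intro a ha hb
    simp only [hP, hM, Finset.mem_filter] at ha hb
    omega
  have hunion : P ∪ M = S := by
    ext j
    simp only [hP, hM, Finset.mem_union, Finset.mem_filter]
    rcases hA j with h | h <;> simp [h] <;> tauto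
  have hsplit : ∀ f : V → ℝ, ∑ j ∈ S, f j = ∑ j ∈ P, f j + ∑ j ∈ M, f j := by
    intro f; rw [← hunion, Finset.sum_union hdisj]
  have hPA : ∑ j ∈ P, (A j : ℝ) = P.card := by
    rw [Finset.sum_congr rfl (fun j hj => ?_), Finset.sum_const, nsmul_eq_mul, mul_one]
    simp only [hP, Finset.mem_filter] at hj
    exact_mod_cast hj.2
  have hMA : ∑ j ∈ M, (A j : ℝ) = -M.card := by
    have : ∑ j ∈ M, (A j : ℝ) = ∑ j ∈ M, (-1 : ℝ) := by
      refine Finset.sum_congr rfl fun j hj => ?_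
      simp only [hM, Finset.mem_filter] at hj
      rw [hj.2]; norm_num
    rw [this, Finset.sum_const]; simp
  have hpm : (M.card : ℝ) < P.card := by
    rw [hsplit, hPA, hMA] at hsum; linarith
  have hpmn : M.card < P.card := by exact_mod_cast hpm
  have hcard2 : P.card + M.card ≤ d := by
    rw [← Finset.card_union_of_disjoint hdisj, hunion]; exact hcard
  have hPz : ∑ j ∈ P, z j * (A j : ℝ) = ∑ j ∈ P, z j := by
    refine Finset.sum_congr rfl fun j hj => ?_
    simp only [hP, Finset.mem_filter] at hj
    rw [hj.2]; push_cast; ring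
  have hMz : ∑ j ∈ M, z j * (A j : ℝ) = -∑ j ∈ M, z j := by
    rw [← Finset.sum_neg_distrib]
    refine Finset.sum_congr rfl fun j hj => ?_
    simp only [hM, Finset.mem_filter] at hj
    rw [hj.2]; push_cast; ring
  have hPsub : P ⊆ S := Finset.filter_subset _ _
  have hMsub : M ⊆ S := Finset.filter_subset _ _
  have hPne : P.Nonempty := Finset.card_pos.mp (by omega)
  rw [hsplit, hPz, hMz]
  by_cases hMe : M = ∅
  · simp only [hMe, Finset.sum_empty]
    have := Finset.sum_pos (fun j hj => hz j (hPsub hj)) hPne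
    linarith
  · have hMne : M.Nonempty := Finset.nonempty_iff_ne_empty.mpr hMe
    obtain ⟨j1, hj1, hj1min⟩ := Finset.exists_min_image P z hPne
    obtain ⟨j2, hj2, hj2max⟩ := Finset.exists_max_image M z hMne
    have hPsum : (P.card : ℝ) * z j1 ≤ ∑ j ∈ P, z j := by
      have := Finset.card_nsmul_le_sum P z (z j1) hj1min
      simpa [nsmul_eq_mul] using this
    have hMsum : ∑ j ∈ M, z j ≤ (M.card : ℝ) * z j2 := by
      have := Finset.sum_le_card_nsmul M z (z j2) hj2max
      simpa [nsmul_eq_mul] using this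
    have hz1 : 0 < z j1 := hz j1 (hPsub hj1)
    have hz2 : 0 < z j2 := hz j2 (hMsub hj2)
    have hdpos : (0 : ℝ) < (d : ℝ) - 1 := by
      have : (3 : ℝ) ≤ d := by exact_mod_cast hd
      linarith
    have hratio : z j2 * ((d : ℝ) - 1) < ((d : ℝ) + 1) * z j1 := by
      have := hlegal j2 (hMsub hj2) j1 (hPsub hj1)
      exact (div_lt_div_iff₀ hz1 hdpos).mp this
    have hm1 : (1 : ℝ) ≤ M.card := by
      have : 1 ≤ M.card := Finset.card_pos.mpr hMne; exact_mod_cast this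
    have hp1 : (M.card : ℝ) + 1 ≤ P.card := by exact_mod_cast hpmn
    have hcd : (P.card : ℝ) + M.card ≤ d := by exact_mod_cast hcard2
    have key : (M.card : ℝ) * z j2 < (P.card : ℝ) * z j1 := by
      nlinarith [mul_le_mul_of_nonneg_right hp1 hz1.le,
        mul_lt_mul_of_pos_left hratio (lt_of_lt_of_le one_pos hm1)]
    linarith

theorem stmt_0 {V : Type*} (G : SimpleGraph V) [∀ v : V, Fintype (G.neighborSet v)]
    (d : ℕ) (hd : 3 ≤ d) (i : V)
    (hodd : Odd (G.degree i)) (hdeg : G.degree i ≤ d)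
    (z : V → V → ℝ)
    (hz01 : ∀ j ∈ G.neighborFinset i, 0 < z i j ∧ z i j ≤ 1)
    (hlegal : ∀ j ∈ G.neighborFinset i, ∀ k ∈ G.neighborFinset i,
      z i j / z i k < ((d : ℝ) + 1) / ((d : ℝ) - 1))
    (A : V → ℤ) (hA : ∀ j, A j = 1 ∨ A j = -1) :
    (if (0 : ℝ) < ∑ j ∈ G.neighborFinset i, (A j : ℝ) then (1 : ℤ) else -1)
      = (if (0 : ℝ) < ∑ j ∈ G.neighborFinset i, z i j * (A j : ℝ) then (1 : ℤ) else -1) := by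
  classical
  set S := G.neighborFinset i with hS
  have hcard : S.card ≤ d := by rwa [hS, SimpleGraph.card_neighborFinset_eq_degree]
  have hz : ∀ j ∈ S, 0 < z i j := fun j hj => (hz01 j hj).1
  have hne : (∑ j ∈ S, A j) ≠ 0 := by
    have hmod : (∑ j ∈ S, A j) % 2 = 1 := by
      rw [Finset.sum_int_mod]
      have : ∑ j ∈ S, A j % 2 = ∑ j ∈ S, 1 := by
        refine Finset.sum_congr rfl fun j _ => ?_
        rcases hA j with h | h <;> rw [h] <;> decide
      rw [this, Finset.sum_const, nsmul_eq_mul, mul_one]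
      have hoc : Odd S.card := by rwa [hS, SimpleGraph.card_neighborFinset_eq_degree]
      obtain ⟨t, ht⟩ := hoc
      rw [ht]; push_cast; omega
    omega
  have hcast : ∑ j ∈ S, (A j : ℝ) = ((∑ j ∈ S, A j : ℤ) : ℝ) := by push_cast; rfl
  by_cases hpos : (0 : ℝ) < ∑ j ∈ S, (A j : ℝ)
  · rw [if_pos hpos, if_pos (aux_pos S d hd hcard (z i) hz hlegal A hA hpos)]
  · have hneg : ∑ j ∈ S, (A j : ℝ) < 0 := by
      have hne' : (∑ j ∈ S, (A j : ℝ)) ≠ 0 := by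
        rw [hcast]; simp only [ne_eq, Int.cast_eq_zero]; exact hne
      exact lt_of_le_of_ne (not_lt.mp hpos) hne'
    have hnegA : 0 < ∑ j ∈ S, ((-A) j : ℝ) := by
      simp only [Pi.neg_apply, Int.cast_neg, Finset.sum_neg_distrib]
      linarith
    have hA' : ∀ j, (-A) j = 1 ∨ (-A) j = -1 := fun j => by
      rcases hA j with h | h <;> simp [h]
    have := aux_pos S d hd hcard (z i) hz hlegal (-A) hA' hnegA
    simp only [Pi.neg_apply, Int.cast_neg, mul_neg, Finset.sum_neg_distrib] at this
    rw [if_neg hpos, if_neg (by linarith)]
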